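/- The equation x⁴ + y⁴ = z⁴ has no solutions in nonzero Gaussian integers: if x, y, z ∈ ℤ[i] satisfy x⁴ + y⁴ = z⁴, then x = 0 or y = 0 or z = 0. -/

import Mathlib

open Zsqrtd

namespace FermatAux

def lam : GaussianInt := ⟨1, 1⟩
def Ii : GaussianInt := ⟨0, 1⟩

lemma lam_dvd_iff (z : GaussianInt) : lam ∣ z ↔ (2:ℤ) ∣ (z.re + z.im) := by
  constructor
  · rintro ⟨w, rfl⟩
    refine ⟨w.re, ?_⟩
    simp [lam, Zsqrtd.re_mul, Zsqrtd.im_mul]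
    ring
  · rintro ⟨k, hk⟩
    refine ⟨⟨k, z.im - k⟩, ?_⟩
    ext <;> simp [lam, Zsqrtd.re_mul, Zsqrtd.im_mul] <;> omega

lemma norm_lam : lam.norm = 2 := rfl

lemma lam_ne_zero : lam ≠ 0 := by
  intro h
  have : lam.re = 0 := by rw [h]; rfl
  simp [lam] at this

lemma lam_not_unit : ¬ IsUnit lam := by
  intro h
  have := Zsqrtd.norm_eq_one_iff.mpr h
  rw [norm_lam] at this
  simp at this

lemma lam_prime : Prime lam := by
  rw [← UniqueFactorizationMonoid.irreducible_iff_prime]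
  constructor
  · exact lam_not_unit
  · intro a b hab
    have hn : a.norm.natAbs * b.norm.natAbs = 2 := by
      have := congrArg (fun t : GaussianInt => t.norm.natAbs) hab
      simpa [Zsqrtd.norm_mul, Int.natAbs_mul, norm_lam] using this.symm
    rcases (Nat.prime_two.eq_one_or_self_of_dvd a.norm.natAbs ⟨_, hn.symm⟩) with h1 | h2
    · exact Or.inl (Zsqrtd.norm_eq_one_iff.mp h1)
    · right
      apply Zsqrtd.norm_eq_one_iff.mp
      have : b.norm.natAbs ∣ 2 := ⟨_, by rw [← hn]; ring⟩
      rcases (Nat.prime_two.eq_one_or_self_of_dvd b.norm.natAbs this) with h3 | h4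
      · exact h3
      · exfalso
        rw [h2, h4] at hn
        omega

lemma Ii_mul_neg_Ii : Ii * (-Ii) = 1 := by
  ext <;> simp [Ii, Zsqrtd.re_mul, Zsqrtd.im_mul]

lemma isUnit_Ii : IsUnit Ii := IsUnit.of_mul_eq_one (-Ii) Ii_mul_neg_Ii

lemma Ii_sq : Ii ^ 2 = -1 := by
  ext <;> simp [Ii, sq, Zsqrtd.re_mul, Zsqrtd.im_mul]

lemma unit_cases {u : GaussianInt} (hu : IsUnit u) :
    u = 1 ∨ u = -1 ∨ u = Ii ∨ u = -Ii := by
  have h1 : u.norm.natAbs = 1 := Zsqrtd.norm_eq_one_iff.mpr hu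
  have hnn : 0 ≤ u.norm := Zsqrtd.norm_nonneg (by norm_num) u
  have h2 : u.re * u.re + u.im * u.im = 1 := by
    have : u.norm = 1 := by omega
    simpa [Zsqrtd.norm_def] using this
  have hr1 : -1 ≤ u.re := by nlinarith [mul_self_nonneg (u.re + 1), mul_self_nonneg u.im]
  have hr2 : u.re ≤ 1 := by nlinarith [mul_self_nonneg (u.re - 1), mul_self_nonneg u.im]
  have hi1 : -1 ≤ u.im := by nlinarith [mul_self_nonneg (u.im + 1), mul_self_nonneg u.re]
  have hi2 : u.im ≤ 1 := by nlinarith [mul_self_nonneg (u.im - 1), mul_self_nonneg u.re]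
  interval_cases hre : u.re <;> interval_cases him : u.im <;> simp_all <;>
    first
      | (left; ext <;> simp_all <;> done)
      | (right; left; ext <;> simp_all <;> done)
      | (right; right; left; ext <;> simp_all [Ii] <;> done)
      | (right; right; right; ext <;> simp_all [Ii] <;> done)

lemma dvd4_iff (z : GaussianInt) : (4:GaussianInt) ∣ z ↔ (4:ℤ) ∣ z.re ∧ (4:ℤ) ∣ z.im := by
  have h4 : ((4:ℤ) : GaussianInt) = 4 := by norm_cast
  rw [← h4, Zsqrtd.intCast_dvd]

lemma int_aux (a b : ℤ) (h : ¬ (2:ℤ) ∣ (a+b)) :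
    ((4:ℤ) ∣ a*a - b*b - 1 ∨ (4:ℤ) ∣ a*a - b*b + 1) ∧ (4:ℤ) ∣ 2*(a*b) := by
  rcases Int.even_or_odd a with ⟨m, hm⟩ | ⟨m, hm⟩ <;>
    rcases Int.even_or_odd b with ⟨t, ht⟩ | ⟨t, ht⟩ <;> subst hm ht
  · omega
  · exact ⟨Or.inr ⟨m*m - t*t - t, by ring⟩, ⟨m*(2*t+1), by ring⟩⟩
  · exact ⟨Or.inl ⟨m*m + m - t*t, by ring⟩, ⟨t*(2*m+1), by ring⟩⟩
  · omega

lemma sq_coords (z : GaussianInt) :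
    (z^2).re = z.re*z.re - z.im*z.im ∧ (z^2).im = 2*(z.re*z.im) := by
  rw [sq]
  constructor
  · rw [Zsqrtd.re_mul]; ring_nf
  · rw [Zsqrtd.im_mul]; ring

lemma odd_sq_mod4 {z : GaussianInt} (h : ¬ lam ∣ z) :
    (4:GaussianInt) ∣ z^2 - 1 ∨ (4:GaussianInt) ∣ z^2 + 1 := by
  rw [lam_dvd_iff] at h
  obtain ⟨hre, him⟩ := sq_coords z
  rcases (int_aux z.re z.im h) with ⟨h1 | h1, h2⟩
  · left
    rw [dvd4_iff]
    constructor
    · simpa [Zsqrtd.re_sub, hre] using h1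
    · simpa [Zsqrtd.im_sub, him] using h2
  · right
    rw [dvd4_iff]
    constructor
    · simpa [Zsqrtd.re_add, hre] using h1
    · simpa [Zsqrtd.im_add, him] using h2

lemma odd_pow4_mod4 {z : GaussianInt} (h : ¬ lam ∣ z) : (4:GaussianInt) ∣ z^4 - 1 := by
  rcases odd_sq_mod4 h with h1 | h1
  · have e : z^4 - 1 = (z^2 - 1) * (z^2 + 1) := by ring
    exact e ▸ h1.mul_right _
  · have e : z^4 - 1 = (z^2 + 1) * (z^2 - 1) := by ring
    exact e ▸ h1.mul_right _

lemma odd_mul {a b : GaussianInt} (ha : ¬ lam ∣ a) (hb : ¬ lam ∣ b) : ¬ lam ∣ a * b :=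
  fun h => ((lam_prime.2.2 _ _ h).elim ha hb)

lemma odd_pow {a : GaussianInt} (ha : ¬ lam ∣ a) (n : ℕ) : ¬ lam ∣ a ^ n :=
  fun h => ha (lam_prime.dvd_of_dvd_pow h)

lemma odd_unit {u : GaussianInt} (hu : IsUnit u) : ¬ lam ∣ u :=
  fun h => lam_not_unit (isUnit_of_dvd_unit h hu)

lemma odd_ne_zero {a : GaussianInt} (ha : ¬ lam ∣ a) : a ≠ 0 :=
  fun h => ha (h ▸ dvd_zero lam)

lemma odd_sub_even {a b : GaussianInt} (ha : ¬ lam ∣ a) (hb : ¬ lam ∣ b) : lam ∣ a - b := by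
  rw [lam_dvd_iff] at *
  simp only [Zsqrtd.re_sub, Zsqrtd.im_sub]
  omega

/-- extraction of the power of `lam` -/
lemma extract : ∀ N : ℕ, ∀ z : GaussianInt, z.norm.natAbs = N → z ≠ 0 →
    ∃ n w, ¬ lam ∣ w ∧ z = lam ^ n * w := by
  intro N
  induction N using Nat.strong_induction_on with
  | _ N ih =>
    intro z hN hz
    by_cases h : lam ∣ z
    · obtain ⟨w, rfl⟩ := h
      have hw : w ≠ 0 := by
        intro h0; rw [h0, mul_zero] at hz; exact hz rfl
      have hlt : w.norm.natAbs < N := by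
        have : (lam * w).norm.natAbs = 2 * w.norm.natAbs := by
          rw [Zsqrtd.norm_mul, Int.natAbs_mul, norm_lam]; rfl
        have hw1 : w.norm.natAbs ≠ 0 := by
          intro h0
          apply hw
          rw [← Zsqrtd.norm_eq_zero_iff (by norm_num : (-1:ℤ) < 0) w]
          omega
        omega
      obtain ⟨n, u, hu, rfl⟩ := ih _ hlt w rfl hw
      exact ⟨n+1, u, hu, by ring⟩
    · exact ⟨0, z, h, by rw [pow_zero, one_mul]⟩

/-- uniqueness of the lam-power decomposition -/
lemma uniq : ∀ j k : ℕ, ∀ P Q : GaussianInt, ¬ lam ∣ P → ¬ lam ∣ Q →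
    lam ^ j * P = lam ^ k * Q → j = k ∧ P = Q := by
  intro j
  induction j with
  | zero =>
    intro k P Q hP hQ h
    rw [pow_zero, one_mul] at h
    cases k with
    | zero => rw [pow_zero, one_mul] at h; exact ⟨rfl, h⟩
    | succ k' =>
      exfalso; apply hP
      rw [h, pow_succ]
      exact ⟨lam ^ k' * Q, by ring⟩
  | succ j' ihj =>
    intro k P Q hP hQ h
    cases k with
    | zero =>
      exfalso; apply hQ
      rw [pow_zero, one_mul] at h
      rw [← h, pow_succ]
      exact ⟨lam ^ j' * P, by ring⟩
    | succ k' =>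
      have h' : lam ^ j' * P = lam ^ k' * Q := by
        apply mul_left_cancel₀ lam_ne_zero
        calc lam * (lam ^ j' * P) = lam ^ (j'+1) * P := by ring
        _ = lam ^ (k'+1) * Q := h
        _ = lam * (lam ^ k' * Q) := by ring
      obtain ⟨h1, h2⟩ := ihj k' P Q hP hQ h'
      exact ⟨by omega, h2⟩

lemma two_eq : (2:GaussianInt) = -Ii * lam^2 := by
  ext <;> simp [Ii, lam, sq, Zsqrtd.re_mul, Zsqrtd.im_mul]

lemma lam_pow4 : lam^4 = (-4 : GaussianInt) := by
  have h2 : lam^2 = Ii * 2 := by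
    ext <;> simp [Ii, lam, sq, Zsqrtd.re_mul, Zsqrtd.im_mul]
  calc lam^4 = (lam^2)^2 := by ring
  _ = (Ii*2)^2 := by rw [h2]
  _ = Ii^2 * 4 := by ring
  _ = -4 := by rw [Ii_sq]; ring

lemma odd_add_even {a b : GaussianInt} (ha : ¬ lam ∣ a) (hb : ¬ lam ∣ b) : lam ∣ a + b := by
  rw [lam_dvd_iff] at *
  simp only [Zsqrtd.re_add, Zsqrtd.im_add]
  omega

set_option maxHeartbeats 1000000 in
lemma descent : ∀ n : ℕ, ∀ α β μ ε δ : GaussianInt, IsUnit ε → IsUnit δ →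
    ¬ lam ∣ α → ¬ lam ∣ β → ¬ lam ∣ μ → IsCoprime α β →
    ε * μ^2 = α^4 + δ * lam^(4*n) * β^4 → False := by
  intro n
  induction n with
  | zero =>
    intro α β μ ε δ hε hδ hα hβ hμ hcop heq
    rw [Nat.mul_zero, pow_zero] at heq
    have hα4 := odd_pow4_mod4 hα
    have hβ4 := odd_pow4_mod4 hβ
    rcases odd_sq_mod4 hμ with hμ2 | hμ2
    · have key : (4:GaussianInt) ∣ ε - 1 - δ := by
        have e : ε - 1 - δ = -(ε*(μ^2 - 1)) + (α^4 - 1) + δ*(β^4-1) + (ε*μ^2 - (α^4 + δ*1*β^4)) := by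
          ring
        rw [e, sub_eq_zero.mpr heq, add_zero]
        exact dvd_add (dvd_add (dvd_neg.mpr (hμ2.mul_left ε)) hα4) (hβ4.mul_left δ)
      rcases unit_cases hε with rfl|rfl|rfl|rfl <;> rcases unit_cases hδ with rfl|rfl|rfl|rfl <;>
        (rw [dvd4_iff] at key; simp [Ii] at key <;> omega)
    · have key : (4:GaussianInt) ∣ -ε - 1 - δ := by
        have e : -ε - 1 - δ = -(ε*(μ^2 + 1)) + (α^4 - 1) + δ*(β^4-1) + (ε*μ^2 - (α^4 + δ*1*β^4)) := by
          ring
        rw [e, sub_eq_zero.mpr heq, add_zero]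
        exact dvd_add (dvd_add (dvd_neg.mpr (hμ2.mul_left ε)) hα4) (hβ4.mul_left δ)
      rcases unit_cases hε with rfl|rfl|rfl|rfl <;> rcases unit_cases hδ with rfl|rfl|rfl|rfl <;>
        (rw [dvd4_iff] at key; simp [Ii] at key <;> omega)
  | succ m ih =>
    intro α β μ ε δ hε hδ hα hβ hμ hcop heq
    have h4lam : (4:GaussianInt) ∣ lam^(4*(m+1)) := by
      have e : lam^(4*(m+1)) = (lam^4)^m * lam^4 := by ring
      rw [e, lam_pow4]
      exact dvd_mul_of_dvd_right ⟨-1, by ring⟩ _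
    -- Step 1 : normalize the unit ε to get a genuine square on the left
    have hstep : ∃ μ' : GaussianInt, ¬ lam ∣ μ' ∧
        μ'^2 = α^4 + δ * lam^(4*(m+1)) * β^4 := by
      have hd1 : (4:GaussianInt) ∣ ε*μ^2 - α^4 := by
        have e : ε*μ^2 - α^4 = δ * lam^(4*(m+1)) * β^4 := by linear_combination heq
        rw [e]
        exact (h4lam.mul_left δ).mul_right _
      rcases odd_sq_mod4 hμ with hμ2 | hμ2
      · have key : (4:GaussianInt) ∣ ε - 1 := by
          have e : ε - 1 = -(ε*(μ^2-1)) + (α^4-1) + (ε*μ^2 - α^4) := by ring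
          rw [e]
          exact dvd_add (dvd_add (dvd_neg.mpr (hμ2.mul_left ε)) (odd_pow4_mod4 hα)) hd1
        have hε1 : ε = 1 := by
          rcases unit_cases hε with rfl|rfl|rfl|rfl
          · rfl
          all_goals (exfalso; rw [dvd4_iff] at key; simp [Ii] at key <;> omega)
        refine ⟨μ, hμ, ?_⟩
        rw [hε1, one_mul] at heq
        exact heq
      · have key : (4:GaussianInt) ∣ ε + 1 := by
          have e : ε + 1 = ε*(μ^2+1) - (ε*μ^2 - α^4) - (α^4-1) := by ring
          rw [e]
          exact dvd_sub (dvd_sub (hμ2.mul_left ε) hd1) (odd_pow4_mod4 hα)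
        have hε1 : ε = -1 := by
          rcases unit_cases hε with rfl|rfl|rfl|rfl
          · exfalso; rw [dvd4_iff] at key; simp [Ii] at key <;> omega
          · rfl
          all_goals (exfalso; rw [dvd4_iff] at key; simp [Ii] at key <;> omega)
        refine ⟨Ii * μ, odd_mul (odd_unit isUnit_Ii) hμ, ?_⟩
        rw [hε1] at heq
        rw [mul_pow, Ii_sq]
        linear_combination heq
    obtain ⟨μ', hμ', heq'⟩ := hstep
    have hβ0 : β ≠ 0 := odd_ne_zero hβ
    obtain ⟨dU, rfl⟩ := hδ
    have hf : (μ' - α^2) * (μ' + α^2) = ↑dU * lam^(4*(m+1)) * β^4 := by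
      linear_combination heq'
    have hRHS0 : (↑dU : GaussianInt) * lam^(4*(m+1)) * β^4 ≠ 0 :=
      mul_ne_zero (mul_ne_zero dU.ne_zero (pow_ne_zero _ lam_ne_zero)) (pow_ne_zero _ hβ0)
    have hf₁0 : μ' - α^2 ≠ 0 := by
      intro h0; rw [h0, zero_mul] at hf; exact hRHS0 hf.symm
    have hf₂0 : μ' + α^2 ≠ 0 := by
      intro h0; rw [h0, mul_zero] at hf; exact hRHS0 hf.symm
    obtain ⟨j, P, hP, hfP⟩ := extract _ _ rfl hf₁0
    obtain ⟨k, Q, hQ, hfQ⟩ := extract _ _ rfl hf₂0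
    have hα2 : ¬ lam ∣ α^2 := odd_pow hα 2
    have hjpos : 1 ≤ j := by
      rcases Nat.eq_zero_or_pos j with rfl | h
      · exfalso
        apply hP
        have hdd := odd_sub_even hμ' hα2
        rw [hfP, pow_zero, one_mul] at hdd
        exact hdd
      · exact h
    have hkpos : 1 ≤ k := by
      rcases Nat.eq_zero_or_pos k with rfl | h
      · exfalso
        apply hQ
        have hdd := odd_add_even hμ' hα2
        rw [hfQ, pow_zero, one_mul] at hdd
        exact hdd
      · exact h
    have hprod : lam^(j+k) * (P*Q) = lam^(4*(m+1)) * (↑dU * β^4) := by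
      rw [pow_add]
      linear_combination hf - hfQ * (lam^j * P) - hfP * (μ' + α^2)
    have hPQodd : ¬ lam ∣ P*Q := odd_mul hP hQ
    have hRodd : ¬ lam ∣ ↑dU * β^4 := odd_mul (odd_unit dU.isUnit) (odd_pow hβ 4)
    obtain ⟨hjk, hPQ⟩ := uniq _ _ _ _ hPQodd hRodd hprod
    -- coprimality of the two factors
    have hcopPQ : IsCoprime P Q := by
      apply isCoprime_of_prime_dvd
      · rintro ⟨h0, -⟩; exact (odd_ne_zero hP) h0
      · intro p hp hpP hpQ
        have hplam : ¬ p ∣ lam := by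
          intro hpl
          obtain ⟨c, hc⟩ := hpl
          rcases lam_prime.irreducible.isUnit_or_isUnit hc with h | h
          · exact hp.not_unit h
          · apply hP
            refine dvd_trans ⟨↑h.unit⁻¹, ?_⟩ hpP
            rw [← h.unit_spec] at hc
            rw [hc, mul_assoc, Units.mul_inv, mul_one]
        have hp2 : ¬ p ∣ (2:GaussianInt) := by
          intro h2
          rw [two_eq] at h2
          have h2' : p ∣ lam^2 * (-Ii) := by rwa [mul_comm] at h2
          rcases hp.2.2 _ _ h2' with h | h
          · rcases hp.2.2 _ _ (by rwa [sq] at h) with h' | h' <;> exact hplam h'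
          · exact hp.not_unit (isUnit_of_dvd_unit h isUnit_Ii.neg)
        have hs : p ∣ 2*μ' := by
          have e : 2*μ' = lam^j*P + lam^k*Q := by
            linear_combination hfP + hfQ
          rw [e]
          exact dvd_add (hpP.mul_left _) (hpQ.mul_left _)
        have hdμ : p ∣ μ' := (hp.2.2 _ _ hs).resolve_left hp2
        have hdα : p ∣ α := by
          have hs2 : p ∣ 2*α^2 := by
            have e : 2*α^2 = lam^k*Q - lam^j*P := by
              linear_combination hfQ - hfP
            rw [e]
            exact dvd_sub (hpQ.mul_left _) (hpP.mul_left _)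
          exact hp.dvd_of_dvd_pow ((hp.2.2 _ _ hs2).resolve_left hp2)
        have hdβ : p ∣ β := by
          have h1 : p ∣ lam^(4*(m+1)) * (↑dU * β^4) := by
            rw [← hprod]
            exact ((hpP.mul_right Q).mul_left _)
          rcases hp.2.2 _ _ h1 with h | h
          · exact absurd (hp.dvd_of_dvd_pow h) hplam
          · rcases hp.2.2 _ _ h with h' | h'
            · exact absurd (hp.not_unit (isUnit_of_dvd_unit h' dU.isUnit)) (by simp)
            · exact hp.dvd_of_dvd_pow h'
        exact hp.not_unit (hcop.isUnit_of_dvd' hdα hdβ)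
    -- each factor is a unit times a fourth power
    have hUU : (↑dU : GaussianInt) * ↑dU⁻¹ = 1 := Units.mul_inv _
    have hPQ' : (↑dU⁻¹ * P) * Q = β^4 := by
      have : (↑dU⁻¹ : GaussianInt) * (P * Q) = ↑dU⁻¹ * (↑dU * β^4) := by rw [hPQ]
      calc (↑dU⁻¹ * P) * Q = ↑dU⁻¹ * (P*Q) := by ring
      _ = ↑dU⁻¹ * (↑dU * β^4) := by rw [hPQ]
      _ = β^4 := by rw [← mul_assoc, Units.inv_mul, one_mul]
    have hcopunit : IsCoprime (↑dU⁻¹ : GaussianInt) Q := ⟨↑dU, 0, by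
      rw [zero_mul, add_zero, hUU]⟩
    have hcop' : IsCoprime ((↑dU⁻¹ : GaussianInt) * P) Q := IsCoprime.mul_left hcopunit hcopPQ
    obtain ⟨s, hs_assoc⟩ := exists_associated_pow_of_mul_eq_pow' hcop' hPQ'
    obtain ⟨w₁, hw₁⟩ := hs_assoc
    have hQP' : Q * (↑dU⁻¹ * P) = β^4 := by rw [mul_comm]; exact hPQ'
    obtain ⟨t, ht_assoc⟩ := exists_associated_pow_of_mul_eq_pow' hcop'.symm hQP'
    obtain ⟨w₂, hw₂⟩ := ht_assoc
    have hPval : P = (↑dU * ↑w₁) * s^4 := by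
      linear_combination (-(↑dU:GaussianInt)) * hw₁ - P * hUU
    have hQval : Q = ↑w₂ * t^4 := by linear_combination -hw₂
    have hs_odd : ¬ lam ∣ s := by
      intro hls
      exact hP (hPval ▸ ((dvd_pow hls (by norm_num)).mul_left _))
    have ht_odd : ¬ lam ∣ t := by
      intro hlt
      exact hQ (hQval ▸ ((dvd_pow hlt (by norm_num)).mul_left _))
    have hsP : s ∣ P := hPval ▸ ((dvd_pow_self s (by norm_num : (4:ℕ) ≠ 0)).mul_left _)
    have htQ : t ∣ Q := hQval ▸ ((dvd_pow_self t (by norm_num : (4:ℕ) ≠ 0)).mul_left _)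
    have hcop_st : IsCoprime s t :=
      (hcopPQ.of_isCoprime_of_dvd_left hsP).of_isCoprime_of_dvd_right htQ
    -- valuation analysis : {j,k} = {2, 4m+2}
    have hsum : lam^j * P + lam^k * Q = -Ii * lam^2 * μ' := by
      linear_combination -hfP - hfQ + μ' * two_eq
    have hj2 : 2 ≤ j := by
      by_contra hlt
      push_neg at hlt
      have hj1 : j = 1 := by omega
      subst hj1
      obtain rfl : k = 4*m+3 := by omega
      apply hP
      have hcancel : lam * P = lam * (lam*(-Ii*μ') - lam^(4*m+2)*Q) := by
        linear_combination hsum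
      rw [mul_left_cancel₀ lam_ne_zero hcancel]
      exact dvd_sub (Dvd.intro _ rfl) ((dvd_pow_self lam (by omega : 4*m+2 ≠ 0)).mul_right _)
    have hk2 : 2 ≤ k := by
      by_contra hlt
      push_neg at hlt
      have hk1 : k = 1 := by omega
      subst hk1
      obtain rfl : j = 4*m+3 := by omega
      apply hQ
      have hcancel : lam * Q = lam * (lam*(-Ii*μ') - lam^(4*m+2)*P) := by
        linear_combination hsum
      rw [mul_left_cancel₀ lam_ne_zero hcancel]
      exact dvd_sub (Dvd.intro _ rfl) ((dvd_pow_self lam (by omega : 4*m+2 ≠ 0)).mul_right _)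
    have hnb : ¬(3 ≤ j ∧ 3 ≤ k) := by
      rintro ⟨hj3, hk3⟩
      obtain ⟨a, rfl⟩ : ∃ a, j = a+3 := ⟨j-3, by omega⟩
      obtain ⟨b, rfl⟩ : ∃ b, k = b+3 := ⟨k-3, by omega⟩
      apply hμ'
      have hcancel : lam^2 * (-Ii*μ') = lam^2 * (lam * (lam^a*P + lam^b*Q)) := by
        linear_combination -hsum
      have h2 := mul_left_cancel₀ (pow_ne_zero 2 lam_ne_zero) hcancel
      have hdd : lam ∣ -Ii * μ' := ⟨_, h2⟩
      rcases lam_prime.2.2 _ _ hdd with h | h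
      · exact absurd (isUnit_of_dvd_unit h isUnit_Ii.neg) lam_not_unit
      · exact h
    have hdiff : lam^k*Q - lam^j*P = -Ii*lam^2*α^2 := by
      linear_combination hfP - hfQ + α^2 * two_eq
    rcases (by omega : j = 2 ∨ k = 2) with rfl | rfl
    · obtain rfl : k = 4*m+2 := by omega
      rw [hPval, hQval] at hdiff
      have hkey : ↑w₂ * lam^(4*m) * t^4 - (↑dU * ↑w₁) * s^4 = -Ii*α^2 := by
        apply mul_left_cancel₀ (pow_ne_zero 2 lam_ne_zero)
        linear_combination hdiff
      have hU1 : ((↑dU : GaussianInt) * ↑w₁) * ((↑w₁⁻¹ : GaussianInt) * ↑dU⁻¹) = 1 := by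
        have a1 : (↑w₁ : GaussianInt) * ↑w₁⁻¹ = 1 := Units.mul_inv _
        have a2 : (↑dU : GaussianInt) * ↑dU⁻¹ = 1 := Units.mul_inv _
        linear_combination ((↑dU : GaussianInt) * ↑dU⁻¹) * a1 + a2
      have hfinal : (Ii * (↑w₁⁻¹ * ↑dU⁻¹)) * α^2
          = s^4 + (-(↑w₁⁻¹ * ↑dU⁻¹ * ↑w₂)) * lam^(4*m) * t^4 := by
        linear_combination ((↑w₁⁻¹:GaussianInt) * ↑dU⁻¹) * hkey + s^4 * hU1
      exact ih s t α _ _ (isUnit_Ii.mul ((w₁⁻¹.isUnit).mul (dU⁻¹).isUnit))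
        (((w₁⁻¹.isUnit).mul (dU⁻¹).isUnit).mul w₂.isUnit).neg
        hs_odd ht_odd hα hcop_st hfinal
    · obtain rfl : j = 4*m+2 := by omega
      rw [hPval, hQval] at hdiff
      have hkey : ↑w₂ * t^4 - (↑dU * ↑w₁) * lam^(4*m) * s^4 = -Ii*α^2 := by
        apply mul_left_cancel₀ (pow_ne_zero 2 lam_ne_zero)
        linear_combination hdiff
      have hU2 : (↑w₂ : GaussianInt) * ↑w₂⁻¹ = 1 := Units.mul_inv _
      have hfinal : (-Ii * ↑w₂⁻¹) * α^2
          = t^4 + (-(↑w₂⁻¹ * (↑dU * ↑w₁))) * lam^(4*m) * s^4 := by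
        linear_combination (-(↑w₂⁻¹:GaussianInt)) * hkey + t^4 * hU2
      exact ih t s α _ _ (isUnit_Ii.neg.mul w₂⁻¹.isUnit)
        ((w₂⁻¹.isUnit.mul (dU.isUnit.mul w₁.isUnit))).neg
        ht_odd hs_odd hα hcop_st.symm hfinal

lemma not_four_dvd_one : ¬ (4:GaussianInt) ∣ 1 := by
  rw [dvd4_iff]
  simp only [Zsqrtd.re_one, Zsqrtd.im_one]
  omega

lemma not_four_dvd_two : ¬ (4:GaussianInt) ∣ 2 := by
  rw [dvd4_iff]
  simp only [Zsqrtd.re_ofNat, Zsqrtd.im_ofNat]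
  omega

lemma norm_natAbs_pos {x : GaussianInt} (hx : x ≠ 0) : 1 ≤ x.norm.natAbs := by
  have h := (Zsqrtd.norm_eq_zero_iff (by norm_num : (-1:ℤ) < 0) x)
  rcases Nat.eq_zero_or_pos x.norm.natAbs with h0 | h1
  · exfalso; apply hx; rw [← h]; omega
  · exact h1

/-- a coprime solution yields a contradiction via parity analysis + descent -/
lemma coprime_case {x y z : GaussianInt} (hx : x ≠ 0) (hy : y ≠ 0) (hz : z ≠ 0)
    (hcop : IsCoprime x y) (h : x^4 + y^4 = z^4) : False := by
  by_cases hx2 : lam ∣ x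
  · by_cases hy2 : lam ∣ y
    · exact lam_not_unit (hcop.isUnit_of_dvd' hx2 hy2)
    · -- lam ∣ x, lam ∤ y : swap roles
      have hz2 : ¬ lam ∣ z := by
        intro hlz
        apply hy2
        have : lam ∣ y^4 := by
          have e : y^4 = z^4 - x^4 := by linear_combination h
          rw [e]
          exact dvd_sub (dvd_pow hlz (by norm_num)) (dvd_pow hx2 (by norm_num))
        exact lam_prime.dvd_of_dvd_pow this
      obtain ⟨a, u, hu, rfl⟩ := extract _ x rfl hx
      have hequ : (1:GaussianInt) * (z^2)^2 = y^4 + 1 * lam^(4*a) * u^4 := by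
        have e1 : lam^(4*a) * u^4 = (lam^a * u)^4 := by
          rw [mul_pow, ← pow_mul, Nat.mul_comm]
        rw [one_mul, one_mul, e1]
        linear_combination -h
      exact descent a y u (z^2) 1 1 isUnit_one isUnit_one hy2 hu (odd_pow hz2 2)
        (hcop.symm.of_isCoprime_of_dvd_right (Dvd.intro_left _ rfl)) hequ
  · by_cases hy2 : lam ∣ y
    · have hz2 : ¬ lam ∣ z := by
        intro hlz
        apply hx2
        have : lam ∣ x^4 := by
          have e : x^4 = z^4 - y^4 := by linear_combination h
          rw [e]
          exact dvd_sub (dvd_pow hlz (by norm_num)) (dvd_pow hy2 (by norm_num))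
        exact lam_prime.dvd_of_dvd_pow this
      obtain ⟨a, u, hu, rfl⟩ := extract _ y rfl hy
      have hequ : (1:GaussianInt) * (z^2)^2 = x^4 + 1 * lam^(4*a) * u^4 := by
        have e1 : lam^(4*a) * u^4 = (lam^a * u)^4 := by
          rw [mul_pow, ← pow_mul, Nat.mul_comm]
        rw [one_mul, one_mul, e1]
        linear_combination -h
      exact descent a x u (z^2) 1 1 isUnit_one isUnit_one hx2 hu (odd_pow hz2 2)
        (hcop.of_isCoprime_of_dvd_right (Dvd.intro_left _ rfl)) hequ
    · -- both odd : mod 4 contradiction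
      have hx4 := odd_pow4_mod4 hx2
      have hy4 := odd_pow4_mod4 hy2
      by_cases hz2 : lam ∣ z
      · -- 4 ∣ z^4 and 4 ∣ x⁴+y⁴-2 = z⁴-2 so 4 ∣ 2
        apply not_four_dvd_two
        obtain ⟨w, rfl⟩ := hz2
        have hz4 : (4:GaussianInt) ∣ (lam*w)^4 := by
          rw [mul_pow, lam_pow4]
          exact ⟨-(w^4), by ring⟩
        have e : (2:GaussianInt) = (lam*w)^4 - (x^4-1) - (y^4-1) - ((lam*w)^4 - (x^4+y^4)) := by
          ring
        rw [e, sub_eq_zero.mpr h.symm, sub_zero]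
        exact dvd_sub (dvd_sub hz4 hx4) hy4
      · apply not_four_dvd_one
        have hz4 := odd_pow4_mod4 hz2
        have e : (-1:GaussianInt) = (x^4-1) + (y^4-1) - (z^4-1) + (z^4 - (x^4+y^4)) := by ring
        rw [← dvd_neg, e, sub_eq_zero.mpr h.symm, add_zero]
        exact dvd_sub (dvd_add hx4 hy4) hz4

lemma no_sol : ∀ N : ℕ, ∀ x y z : GaussianInt, x.norm.natAbs = N → x ≠ 0 → y ≠ 0 → z ≠ 0 →
    x^4 + y^4 = z^4 → False := by
  intro N
  induction N using Nat.strong_induction_on with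
  | _ N ih =>
    intro x y z hN hx hy hz h
    by_cases hc : IsCoprime x y
    · exact coprime_case hx hy hz hc h
    · obtain ⟨p, hp, hpx, hpy⟩ : ∃ p, Prime p ∧ p ∣ x ∧ p ∣ y := by
        by_contra hk
        push_neg at hk
        exact hc (isCoprime_of_prime_dvd (fun h0 => hx h0.1)
          (fun q hq hqx hqy => hk q hq hqx hqy))
      have hpz : p ∣ z := by
        have h1 : p^4 ∣ z^4 := by
          rw [← h]
          exact dvd_add (pow_dvd_pow_of_dvd hpx 4) (pow_dvd_pow_of_dvd hpy 4)
        exact (IsIntegrallyClosed.pow_dvd_pow_iff (by norm_num : (4:ℕ) ≠ 0)).mp h1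
      obtain ⟨x₁, rfl⟩ := hpx
      obtain ⟨y₁, rfl⟩ := hpy
      obtain ⟨z₁, rfl⟩ := hpz
      have hp0 : p ≠ 0 := hp.ne_zero
      have heq1 : x₁^4 + y₁^4 = z₁^4 := by
        apply mul_left_cancel₀ (pow_ne_zero 4 hp0)
        have e : p^4 * (x₁^4 + y₁^4) = (p*x₁)^4 + (p*y₁)^4 := by ring
        rw [e, h]
        ring
      have hx₁ : x₁ ≠ 0 := by rintro rfl; rw [mul_zero] at hx; exact hx rfl
      have hy₁ : y₁ ≠ 0 := by rintro rfl; rw [mul_zero] at hy; exact hy rfl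
      have hz₁ : z₁ ≠ 0 := by rintro rfl; rw [mul_zero] at hz; exact hz rfl
      have hlt : x₁.norm.natAbs < N := by
        have e : (p*x₁).norm.natAbs = p.norm.natAbs * x₁.norm.natAbs := by
          rw [Zsqrtd.norm_mul, Int.natAbs_mul]
        have hp2 : 2 ≤ p.norm.natAbs := by
          have h1 := norm_natAbs_pos hp0
          rcases Nat.lt_or_ge p.norm.natAbs 2 with hl | hge
          · exfalso
            have : p.norm.natAbs = 1 := by omega
            exact hp.not_unit (Zsqrtd.norm_eq_one_iff.mp this)
          · exact hge
        have h1 := norm_natAbs_pos hx₁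
        rw [e] at hN
        nlinarith
      exact ih _ hlt x₁ y₁ z₁ rfl hx₁ hy₁ hz₁ heq1

end FermatAux

/-- Fermat's Last Theorem for exponent 4 in `ℤ[i]`: the
equation `x⁴ + y⁴ = z⁴` has no solution in nonzero Gaussian integers. -/
theorem fermat_four_gaussian (x y z : GaussianInt)
    (h : x ^ 4 + y ^ 4 = z ^ 4) : x = 0 ∨ y = 0 ∨ z = 0 := by
  by_contra hcon
  push_neg at hcon
  exact FermatAux.no_sol _ x y z rfl hcon.1 hcon.2.1 hcon.2.2 h
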